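/- For the square n×n matrix A with a_{1j} = a_{nj} = 1 for 2 ≤ j ≤ n−1, a_{i1} = a_{in} = 1 for 2 ≤ i ≤ n−1, a_{1n} = a_{n1} = 1, and all other entries 0 (n ≥ 4), the graph G_A is arbitrarily regularizable and its vulnerability equals n − 4. -/

import Mathlib

open Matrix BigOperators

open Classical in
/-- An undirected graph is arbitrarily regularizable if there is a real weighting of its
edges, not identically zero, and `r > 0`, such that `B w = r e` where `B` is the
incidence matrix. -/
def ArbReg {V : Type*} [Fintype V] [DecidableEq V] (G : SimpleGraph V) : Prop :=
  ∃ (w : Sym2 V → ℝ) (r : ℝ), 0 < r ∧ w ≠ 0 ∧ (∀ e ∉ G.edgeSet, w e = 0) ∧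
    G.incMatrix ℝ *ᵥ w = fun _ => r

/-- Auxiliary weight function. -/
def fw (n : ℕ) (z l : Fin n) (i j : Fin n) : ℝ :=
  if i = j then 0
  else if (i = z ∨ i = l) ∧ (j = z ∨ j = l) then 4 - (n : ℝ)
  else if i = z ∨ j = z ∨ i = l ∨ j = l then 1 else 0

lemma fw_symm (n : ℕ) (z l : Fin n) : ∀ i j, fw n z l i j = fw n z l j i := by
  intro i j
  unfold fw
  split_ifs <;> first | rfl | tauto

/-- The incidence-matrix-weighted degree is the sum of weights on incident edges. -/
lemma incMatrix_mulVec_eq {V : Type*} [Fintype V] [DecidableEq V] (G : SimpleGraph V)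
    [DecidableRel G.Adj] (w : Sym2 V → ℝ) (i : V) :
    (G.incMatrix ℝ *ᵥ w) i = ∑ j ∈ G.neighborFinset i, w s(i, j) := by
  classical
  have himg : Finset.univ.filter (fun e => e ∈ G.incidenceSet i)
      = (G.neighborFinset i).image (fun j => s(i, j)) := by
    ext e
    induction e using Sym2.ind with
    | _ a b =>
      simp only [Finset.mem_filter, Finset.mem_univ, true_and, Finset.mem_image,
        SimpleGraph.mem_neighborFinset, SimpleGraph.mk'_mem_incidenceSet_iff]
      constructor
      · rintro ⟨hab, rfl | rfl⟩
        · exact ⟨b, hab, rfl⟩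
        · exact ⟨a, hab.symm, Sym2.eq_swap⟩
      · rintro ⟨j, hj, hje⟩
        rw [Sym2.eq_iff] at hje
        rcases hje with ⟨rfl, rfl⟩ | ⟨rfl, rfl⟩
        · exact ⟨hj, Or.inl rfl⟩
        · exact ⟨hj.symm, Or.inr rfl⟩
  calc (G.incMatrix ℝ *ᵥ w) i
      = ∑ e ∈ Finset.univ.filter (fun e => e ∈ G.incidenceSet i), w e := by
        rw [Finset.sum_filter]
        simp only [Matrix.mulVec, dotProduct]
        refine Finset.sum_congr rfl fun e _ => ?_
        by_cases h : e ∈ G.incidenceSet i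
        · simp [SimpleGraph.incMatrix_of_mem_incidenceSet _ h, h]
        · simp [SimpleGraph.incMatrix_of_notMem_incidenceSet _ h, h]
    _ = ∑ e ∈ (G.neighborFinset i).image (fun j => s(i, j)), w e := by rw [himg]
    _ = ∑ j ∈ G.neighborFinset i, w s(i, j) :=
        Finset.sum_image (fun a _ b _ h => Sym2.congr_right.mp h)

lemma fw_endpoints (n : ℕ) {z l : Fin n} (h : z ≠ l) :
    fw n z l z l = 4 - (n : ℝ) ∧ fw n z l l z = 4 - (n : ℝ) := by
  constructor
  · unfold fw
    rw [if_neg h, if_pos ⟨Or.inl rfl, Or.inr rfl⟩]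
  · unfold fw
    rw [if_neg (Ne.symm h), if_pos ⟨Or.inr rfl, Or.inl rfl⟩]

lemma fw_one {n : ℕ} {z l i j : Fin n} (hij : i ≠ j)
    (hcond : i = z ∨ j = z ∨ i = l ∨ j = l)
    (hnot : ¬((i = z ∨ i = l) ∧ (j = z ∨ j = l))) : fw n z l i j = 1 := by
  unfold fw
  rw [if_neg hij, if_neg hnot, if_pos hcond]

/-- For the `n × n` matrix `A` (`n ≥ 4`) whose nonzero entries are exactly at the
positions `(i,j)`, `i ≠ j`, where `i` or `j` is the first or the last index (i.e. nodes
`1` and `n` are adjacent to each other and to all middle nodes), the graph `G_A` is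
arbitrarily regularizable and its vulnerability
`ν̄ = max { |S| - |N(S)| : S nonempty independent }` equals `n - 4`. -/
theorem chainable_example_arb_reg_vulnerability (n : ℕ) (hn : 4 ≤ n)
    (A : Matrix (Fin n) (Fin n) ℝ)
    (hA : ∀ i j, A i j =
      if i ≠ j ∧ (i.val = 0 ∨ i.val = n - 1 ∨ j.val = 0 ∨ j.val = n - 1) then 1 else 0)
    (G : SimpleGraph (Fin n)) (hG : ∀ i j, G.Adj i j ↔ A i j ≠ 0) :
    ArbReg G ∧
    (∃ S : Set (Fin n), S.Nonempty ∧ (∀ u ∈ S, ∀ v ∈ S, ¬ G.Adj u v) ∧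
      (S.ncard : ℤ) - ({v : Fin n | ∃ u ∈ S, G.Adj u v}.ncard : ℤ) = (n : ℤ) - 4) ∧
    (∀ S : Set (Fin n), S.Nonempty → (∀ u ∈ S, ∀ v ∈ S, ¬ G.Adj u v) →
      (S.ncard : ℤ) - ({v : Fin n | ∃ u ∈ S, G.Adj u v}.ncard : ℤ) ≤ (n : ℤ) - 4) := by
  classical
  obtain ⟨z, hz0⟩ : ∃ z : Fin n, z.val = 0 := ⟨⟨0, by omega⟩, rfl⟩
  obtain ⟨l, hl0⟩ : ∃ l : Fin n, l.val = n - 1 := ⟨⟨n - 1, by omega⟩, rfl⟩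
  obtain ⟨m, hm0⟩ : ∃ m : Fin n, m.val = 1 := ⟨⟨1, by omega⟩, rfl⟩
  have hne : ∀ a b : Fin n, a.val ≠ b.val → a ≠ b :=
    fun a b h hab => h (congrArg Fin.val hab)
  have hzl : z ≠ l := hne _ _ (by omega)
  have hzm : z ≠ m := hne _ _ (by omega)
  have hml : m ≠ l := hne _ _ (by omega)
  have hval0 : ∀ i : Fin n, i.val = 0 ↔ i = z := fun i => by
    rw [Fin.ext_iff, hz0]
  have hvall : ∀ i : Fin n, i.val = n - 1 ↔ i = l := fun i => by
    rw [Fin.ext_iff, hl0]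
  have hadj : ∀ i j, G.Adj i j ↔ i ≠ j ∧ (i = z ∨ i = l ∨ j = z ∨ j = l) := by
    intro i j
    rw [hG, hA]
    simp only [hval0, hvall]
    split_ifs with h
    · simp [h]
    · simp [h]
  have hmidcard : ((Finset.univ.erase l).erase z).card = n - 2 := by
    rw [Finset.card_erase_of_mem (by simp [Finset.mem_erase, hzl]),
      Finset.card_erase_of_mem (Finset.mem_univ l), Finset.card_univ, Fintype.card_fin]
    omega
  refine ⟨?_, ?_, ?_⟩
  · -- ArbReg
    refine ⟨Sym2.lift ⟨fw n z l, fw_symm n z l⟩, 2, by norm_num, ?_, ?_, ?_⟩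
    · intro h0
      have hv : fw n z l z m = 1 :=
        fw_one hzm (Or.inl rfl)
          (by rintro ⟨-, h | h⟩ <;> first | exact hzm h.symm | exact hml h)
      have h2 : fw n z l z m = 0 := by
        simpa only [Sym2.lift_mk, Pi.zero_apply] using congrFun h0 s(z, m)
      rw [hv] at h2
      exact one_ne_zero h2
    · intro e he
      induction e using Sym2.ind with
      | _ a b =>
        rw [SimpleGraph.mem_edgeSet, hadj] at he
        push_neg at he
        rw [Sym2.lift_mk]
        show fw n z l a b = 0
        unfold fw
        by_cases hab : a = b
        · rw [if_pos hab]
        · have hcond := he hab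
          obtain ⟨h1, h2, h3, h4⟩ := hcond
          rw [if_neg hab, if_neg (by tauto), if_neg (by tauto)]
    · funext i
      rw [incMatrix_mulVec_eq]
      by_cases hiz : i = z
      · have hN : G.neighborFinset i = Finset.univ.erase i := by
          ext j
          simp only [SimpleGraph.mem_neighborFinset, hadj, Finset.mem_erase, Finset.mem_univ,
            and_true]
          constructor
          · rintro ⟨h, _⟩; exact fun hj => h hj.symm
          · intro hj; exact ⟨fun h => hj h.symm, Or.inl hiz⟩
        rw [hN]
        have hlm : l ∈ Finset.univ.erase i := by
          simp only [Finset.mem_erase, Finset.mem_univ, and_true]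
          rw [hiz]; exact hzl.symm
        rw [← Finset.add_sum_erase _ _ hlm]
        have h1 : Sym2.lift ⟨fw n z l, fw_symm n z l⟩ s(i, l) = 4 - (n : ℝ) := by
          rw [Sym2.lift_mk, hiz]; exact (fw_endpoints n hzl).1
        have h2 : ∀ j ∈ (Finset.univ.erase i).erase l,
            Sym2.lift ⟨fw n z l, fw_symm n z l⟩ s(i, j) = 1 := by
          intro j hj
          rw [Finset.mem_erase, Finset.mem_erase] at hj
          obtain ⟨hjl, hji, _⟩ := hj
          rw [Sym2.lift_mk]
          exact fw_one (fun h => hji h.symm) (Or.inl hiz)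
            (by rintro ⟨-, h | h⟩ <;> first | exact hji (h.trans hiz.symm) | exact hjl h)
        rw [h1, Finset.sum_congr rfl h2, Finset.sum_const, nsmul_eq_mul, mul_one]
        have hc : ((Finset.univ.erase i).erase l).card = n - 2 := by
          rw [Finset.card_erase_of_mem hlm, Finset.card_erase_of_mem (Finset.mem_univ _),
            Finset.card_univ, Fintype.card_fin]
          omega
        rw [hc, Nat.cast_sub (by omega)]
        push_cast
        ring
      · by_cases hil : i = l
        · have hN : G.neighborFinset i = Finset.univ.erase i := by
            ext j
            simp only [SimpleGraph.mem_neighborFinset, hadj, Finset.mem_erase, Finset.mem_univ,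
              and_true]
            constructor
            · rintro ⟨h, _⟩; exact fun hj => h hj.symm
            · intro hj; exact ⟨fun h => hj h.symm, Or.inr (Or.inl hil)⟩
          rw [hN]
          have hzm' : z ∈ Finset.univ.erase i := by
            simp only [Finset.mem_erase, Finset.mem_univ, and_true]
            rw [hil]; exact hzl
          rw [← Finset.add_sum_erase _ _ hzm']
          have h1 : Sym2.lift ⟨fw n z l, fw_symm n z l⟩ s(i, z) = 4 - (n : ℝ) := by
            rw [Sym2.lift_mk, hil]; exact (fw_endpoints n hzl).2
          have h2 : ∀ j ∈ (Finset.univ.erase i).erase z,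
              Sym2.lift ⟨fw n z l, fw_symm n z l⟩ s(i, j) = 1 := by
            intro j hj
            rw [Finset.mem_erase, Finset.mem_erase] at hj
            obtain ⟨hjz, hji, _⟩ := hj
            rw [Sym2.lift_mk]
            exact fw_one (fun h => hji h.symm) (Or.inr (Or.inr (Or.inl hil)))
              (by rintro ⟨-, h | h⟩ <;> first | exact hjz h | exact hji (h.trans hil.symm))
          rw [h1, Finset.sum_congr rfl h2, Finset.sum_const, nsmul_eq_mul, mul_one]
          have hc : ((Finset.univ.erase i).erase z).card = n - 2 := by
            rw [Finset.card_erase_of_mem hzm', Finset.card_erase_of_mem (Finset.mem_univ _),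
              Finset.card_univ, Fintype.card_fin]
            omega
          rw [hc, Nat.cast_sub (by omega)]
          push_cast
          ring
        · -- middle vertex
          have hN : G.neighborFinset i = {z, l} := by
            ext j
            simp only [SimpleGraph.mem_neighborFinset, hadj, Finset.mem_insert,
              Finset.mem_singleton]
            constructor
            · rintro ⟨hij, h | h | h | h⟩
              exacts [absurd h hiz, absurd h hil, Or.inl h, Or.inr h]
            · rintro (rfl | rfl)
              · exact ⟨hiz, Or.inr (Or.inr (Or.inl rfl))⟩
              · exact ⟨hil, Or.inr (Or.inr (Or.inr rfl))⟩
          rw [hN, Finset.sum_pair hzl]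
          have h1 : Sym2.lift ⟨fw n z l, fw_symm n z l⟩ s(i, z) = 1 := by
            rw [Sym2.lift_mk]
            exact fw_one hiz (Or.inr (Or.inl rfl)) (by rintro ⟨h | h, -⟩ <;> tauto)
          have h2 : Sym2.lift ⟨fw n z l, fw_symm n z l⟩ s(i, l) = 1 := by
            rw [Sym2.lift_mk]
            exact fw_one hil (Or.inr (Or.inr (Or.inr rfl))) (by rintro ⟨h | h, -⟩ <;> tauto)
          rw [h1, h2]; norm_num
  · -- the witness set: all middle vertices
    refine ⟨{v : Fin n | v ≠ z ∧ v ≠ l}, ⟨m, hzm.symm, hml⟩, ?_, ?_⟩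
    · rintro u ⟨huz, hul⟩ v ⟨hvz, hvl⟩ hadj'
      rw [hadj] at hadj'
      rcases hadj'.2 with h | h | h | h <;> tauto
    · have hS : {v : Fin n | v ≠ z ∧ v ≠ l}
          = (((Finset.univ.erase l).erase z : Finset (Fin n)) : Set (Fin n)) := by
        ext v
        simp only [Set.mem_setOf_eq, Finset.coe_erase, Set.mem_diff, Finset.coe_univ,
          Set.mem_univ, true_and, Set.mem_singleton_iff]
        tauto
      have hNS : {v : Fin n | ∃ u ∈ {v : Fin n | v ≠ z ∧ v ≠ l}, G.Adj u v} = {z, l} := by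
        ext v
        simp only [Set.mem_setOf_eq, Set.mem_insert_iff, Set.mem_singleton_iff]
        constructor
        · rintro ⟨u, ⟨huz, hul⟩, hadj'⟩
          rw [hadj] at hadj'
          rcases hadj'.2 with h | h | h | h
          exacts [absurd h huz, absurd h hul, Or.inl h, Or.inr h]
        · rintro (rfl | rfl)
          · exact ⟨m, ⟨hzm.symm, hml⟩, by
              rw [hadj]; exact ⟨hzm.symm, Or.inr (Or.inr (Or.inl rfl))⟩⟩
          · exact ⟨m, ⟨hzm.symm, hml⟩, by
              rw [hadj]; exact ⟨hml, Or.inr (Or.inr (Or.inr rfl))⟩⟩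
      rw [hNS, hS, Set.ncard_coe_finset, hmidcard, Set.ncard_pair hzl]
      omega
  · -- upper bound
    intro S hSne hSind
    by_cases hend : ∃ s ∈ S, s = z ∨ s = l
    · obtain ⟨s, hs, hsz⟩ := hend
      have hSeq : S = {s} := by
        ext t
        simp only [Set.mem_singleton_iff]
        constructor
        · intro ht
          by_contra hts
          refine hSind s hs t ht ?_
          rw [hadj]
          refine ⟨fun h => hts h.symm, ?_⟩
          rcases hsz with h | h
          · exact Or.inl h
          · exact Or.inr (Or.inl h)
        · rintro rfl; exact hs
      have hNS : {v : Fin n | ∃ u ∈ S, G.Adj u v}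
          = ((Finset.univ.erase s : Finset (Fin n)) : Set (Fin n)) := by
        ext v
        simp only [hSeq, Set.mem_setOf_eq, Set.mem_singleton_iff, Finset.coe_erase,
          Set.mem_diff, Finset.coe_univ, Set.mem_univ, true_and, exists_eq_left]
        constructor
        · intro hadj'
          rw [hadj] at hadj'
          exact fun h => hadj'.1 h.symm
        · intro hv
          rw [hadj]
          refine ⟨fun h => hv h.symm, ?_⟩
          rcases hsz with h | h
          · exact Or.inl h
          · exact Or.inr (Or.inl h)
      rw [hNS, hSeq, Set.ncard_singleton, Set.ncard_coe_finset,
        Finset.card_erase_of_mem (Finset.mem_univ _), Finset.card_univ, Fintype.card_fin]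
      omega
    · push_neg at hend
      have hSsub : S ⊆ (((Finset.univ.erase l).erase z : Finset (Fin n)) : Set (Fin n)) := by
        intro v hv
        have h' := hend v hv
        simp only [Finset.coe_erase, Set.mem_diff, Finset.coe_univ, Set.mem_univ, true_and,
          Set.mem_singleton_iff]
        tauto
      have hcard1 : S.ncard ≤ n - 2 := by
        have h' := Set.ncard_le_ncard hSsub (Set.toFinite _)
        rwa [Set.ncard_coe_finset, hmidcard] at h'
      obtain ⟨u, hu⟩ := hSne
      have huz : u ≠ z := (hend u hu).1
      have hul : u ≠ l := (hend u hu).2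
      have hNsub : ({z, l} : Set (Fin n)) ⊆ {v : Fin n | ∃ u ∈ S, G.Adj u v} := by
        rintro v (rfl | rfl)
        · exact ⟨u, hu, by rw [hadj]; exact ⟨huz, Or.inr (Or.inr (Or.inl rfl))⟩⟩
        · exact ⟨u, hu, by rw [hadj]; exact ⟨hul, Or.inr (Or.inr (Or.inr rfl))⟩⟩
      have hcard2 : 2 ≤ {v : Fin n | ∃ u ∈ S, G.Adj u v}.ncard := by
        have h' := Set.ncard_le_ncard hNsub (Set.toFinite _)
        rwa [Set.ncard_pair hzl] at h'
      omega
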